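/- For every integer m ≥ 0 and every integer ℓ ≥ 1, r_{m,ℓ} = ∑_{k=0}^{ℓ} S(ℓ,k) · k! · C(m+k, k), where S(ℓ,k) is the Stirling number of the second kind and C(m+k,k) is the binomial coefficient. -/

import Mathlib

/-- `IsBPA m ℓ f` : `f` encodes a barred preferential arrangement of `[ℓ]` with `m` bars.
Each element of `[ℓ]` is assigned a section (one of the `m + 1` sections determined by the
`m` bars) together with a rank inside its section (ties are allowed: elements of the same
section with the same rank form a block); within each section the set of ranks actually used
must be an initial segment `{0, …, t-1}`, so that `f` determines, for each section, an
ordered partition of the elements assigned to it into nonempty blocks. -/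
def IsBPA (m ℓ : ℕ) (f : Fin ℓ → Fin (m + 1) × Fin ℓ) : Prop :=
  ∀ x : Fin ℓ, ∀ r : Fin ℓ, r < (f x).2 → ∃ y : Fin ℓ, (f y).1 = (f x).1 ∧ (f y).2 = r

instance (m ℓ : ℕ) : DecidablePred (IsBPA m ℓ) := fun f => by unfold IsBPA; infer_instance

/-- `bpa m ℓ` : the number of barred preferential arrangements of `[ℓ]` with `m` bars.
In particular `bpa 0 ℓ` is the number of preferential arrangements of `[ℓ]`
(the Fubini / ordered Bell number `r_ℓ`). -/
def bpa (m ℓ : ℕ) : ℕ :=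
  Fintype.card { f : Fin ℓ → Fin (m + 1) × Fin ℓ // IsBPA m ℓ f }

/-- The Stirling numbers of the second kind, `S(n, k)`: the number of partitions of an
`n`-element set into `k` nonempty blocks. -/
def stirling2 : ℕ → ℕ → ℕ
  | 0, 0 => 1
  | 0, _ + 1 => 0
  | _ + 1, 0 => 0
  | n + 1, k + 1 => (k + 1) * stirling2 n (k + 1) + stirling2 n k

section BPAAux
open Finset

def surjCount (ℓ k : ℕ) : ℕ := Fintype.card {g : Fin ℓ → Fin k // Function.Surjective g}

lemma surjCount_zero_zero : surjCount 0 0 = 1 := by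
  refine Fintype.card_eq_one_iff.2 ⟨⟨Fin.elim0, fun b => b.elim0⟩, fun y => ?_⟩
  exact Subtype.ext (funext fun x => x.elim0)

lemma surjCount_succ_zero (ℓ : ℕ) : surjCount (ℓ+1) 0 = 0 :=
  Fintype.card_eq_zero_iff.2 ⟨fun g => (g.1 0).elim0⟩

lemma surjCount_zero_succ (k : ℕ) : surjCount 0 (k+1) = 0 :=
  Fintype.card_eq_zero_iff.2 ⟨fun g => by obtain ⟨a, -⟩ := g.2 0; exact a.elim0⟩

private def backMap (ℓ k : ℕ) :
    (Fin (k+1) × {g : Fin ℓ → Fin (k+1) // Function.Surjective g}) ⊕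
    (Fin (k+1) × {g : Fin ℓ → Fin k // Function.Surjective g}) →
    {g : Fin (ℓ+1) → Fin (k+1) // Function.Surjective g}
  | .inl (v, ⟨g, hg⟩) => ⟨Fin.snoc g v, by
      intro b; obtain ⟨a, ha⟩ := hg b; exact ⟨a.castSucc, by simp [ha]⟩⟩
  | .inr (v, ⟨g, hg⟩) => ⟨Fin.snoc (fun x => v.succAbove (g x)) v, by
      intro b
      rcases eq_or_ne b v with rfl | hb
      · exact ⟨Fin.last ℓ, by simp⟩
      · obtain ⟨j, hj⟩ := Fin.exists_succAbove_eq hb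
        obtain ⟨a, ha⟩ := hg j
        exact ⟨a.castSucc, by simp [ha, hj]⟩⟩

private lemma backMap_bijective (ℓ k : ℕ) : Function.Bijective (backMap ℓ k) := by
  constructor
  · rintro (⟨v, g, hg⟩ | ⟨v, g, hg⟩) (⟨w, g', hg'⟩ | ⟨w, g', hg'⟩) h <;>
      simp only [backMap, Subtype.mk.injEq] at h <;> replace h := congrArg Subtype.val h <;>
      dsimp only at h
    · have hv : v = w := by
        have := congrFun h (Fin.last ℓ); simpa using this
      have hgg : g = g' := by
        funext x; have := congrFun h x.castSucc; simpa using this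
      subst hv hgg; rfl
    · obtain ⟨a, ha⟩ := hg w
      have h2 := congrFun h a.castSucc
      simp only [Fin.snoc_castSucc] at h2
      rw [ha] at h2
      exact absurd h2.symm (Fin.succAbove_ne w (g' a))
    · obtain ⟨a, ha⟩ := hg' v
      have h2 := congrFun h a.castSucc
      simp only [Fin.snoc_castSucc] at h2
      rw [ha] at h2
      exact absurd h2 (Fin.succAbove_ne v (g a))
    · have hv : v = w := by
        have := congrFun h (Fin.last ℓ); simpa using this
      subst hv
      have hgg : g = g' := by
        funext x; have := congrFun h x.castSucc
        simp only [Fin.snoc_castSucc] at this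
        exact Fin.succAbove_right_injective this
      subst hgg; rfl
  · rintro ⟨G, hG⟩
    set v := G (Fin.last ℓ) with hv
    by_cases hs : Function.Surjective (fun x : Fin ℓ => G x.castSucc)
    · refine ⟨.inl (v, ⟨_, hs⟩), ?_⟩
      simp only [backMap]
      refine Subtype.ext (funext fun x => ?_)
      induction x using Fin.lastCases with
      | last => simp [hv]
      | cast i => simp
    · have hne : ∀ x : Fin ℓ, G x.castSucc ≠ v := by
        intro x hx
        refine hs fun b => ?_
        obtain ⟨a, ha⟩ := hG b
        induction a using Fin.lastCases with
        | last => exact ⟨x, hx.trans (hv.trans ha)⟩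
        | cast i => exact ⟨i, ha⟩
      have hex : ∀ x : Fin ℓ, ∃ j : Fin k, v.succAbove j = G x.castSucc :=
        fun x => Fin.exists_succAbove_eq (hne x)
      choose g'' hg'' using hex
      have hsurj : Function.Surjective g'' := by
        intro w
        obtain ⟨a, ha⟩ := hG (v.succAbove w)
        have hal : a ≠ Fin.last ℓ := by
          intro h; rw [h, ← hv] at ha
          exact Fin.succAbove_ne v w ha.symm
        obtain ⟨i, rfl⟩ := Fin.exists_castSucc_eq.2 hal
        refine ⟨i, Fin.succAbove_right_injective (p := v) ?_⟩
        rw [hg'' i, ha]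
      refine ⟨.inr (v, ⟨g'', hsurj⟩), ?_⟩
      simp only [backMap]
      refine Subtype.ext (funext fun x => ?_)
      induction x using Fin.lastCases with
      | last => simp [hv]
      | cast i => simp [hg'']

lemma surjCount_succ_succ (ℓ k : ℕ) :
    surjCount (ℓ+1) (k+1) = (k+1) * surjCount ℓ (k+1) + (k+1) * surjCount ℓ k := by
  have := Fintype.card_of_bijective (backMap_bijective ℓ k)
  simp only [Fintype.card_sum, Fintype.card_prod, Fintype.card_fin] at this
  simp only [surjCount]
  exact this.symm

lemma surjCount_eq (ℓ k : ℕ) : surjCount ℓ k = stirling2 ℓ k * k.factorial := by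
  induction ℓ generalizing k with
  | zero =>
    cases k with
    | zero => simp [surjCount_zero_zero, stirling2]
    | succ k => simp [surjCount_zero_succ, stirling2]
  | succ ℓ ih =>
    cases k with
    | zero => simp [surjCount_succ_zero, stirling2]
    | succ k =>
      rw [surjCount_succ_succ, ih, ih, stirling2, Nat.factorial_succ]
      ring


instance monoDec (k n : ℕ) : DecidablePred (Monotone : (Fin k → Fin n) → Prop) := fun _ =>
  decidable_of_iff _ monotone_iff_forall_lt.symm

def monoCount (k n : ℕ) : ℕ := Fintype.card {h : Fin k → Fin n // Monotone h}

lemma monoCount_zero (n : ℕ) : monoCount 0 n = 1 :=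
  Fintype.card_eq_one_iff.2 ⟨⟨Fin.elim0, fun a => a.elim0⟩,
    fun y => Subtype.ext (funext fun x => x.elim0)⟩

lemma monoCount_succ_zero (k : ℕ) : monoCount (k+1) 0 = 0 :=
  Fintype.card_eq_zero_iff.2 ⟨fun h => (h.1 0).elim0⟩

private def monoBack (k m : ℕ) :
    {h : Fin k → Fin (m+1) // Monotone h} ⊕ {h : Fin (k+1) → Fin m // Monotone h} →
    {h : Fin (k+1) → Fin (m+1) // Monotone h}
  | .inl ⟨h, hh⟩ => ⟨Fin.snoc h (Fin.last m), by
      intro a b hab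
      induction b using Fin.lastCases with
      | last => simp [Fin.le_last]
      | cast j =>
        induction a using Fin.lastCases with
        | last =>
          have : Fin.castSucc j = Fin.last k :=
            le_antisymm (Fin.le_last _) hab
          rw [this]
        | cast i =>
          simp only [Fin.snoc_castSucc]
          exact hh (by exact_mod_cast hab)⟩
  | .inr ⟨h, hh⟩ => ⟨fun x => (h x).castSucc, fun a b hab => by
      simp only [Fin.castSucc_le_castSucc_iff]
      exact hh hab⟩

private lemma monoBack_bijective (k m : ℕ) : Function.Bijective (monoBack k m) := by
  constructor
  · rintro (⟨h, hh⟩ | ⟨h, hh⟩) (⟨h', hh'⟩ | ⟨h', hh'⟩) e <;>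
      simp only [monoBack, Subtype.mk.injEq] at e <;> replace e := congrArg Subtype.val e <;>
      dsimp only at e
    · have : h = h' := by
        funext x; have := congrFun e x.castSucc; simpa using this
      subst this; rfl
    · have := congrFun e (Fin.last k)
      simp only [Fin.snoc_last] at this
      exact absurd this.symm (Fin.ne_of_lt (Fin.castSucc_lt_last _))
    · have := congrFun e (Fin.last k)
      simp only [Fin.snoc_last] at this
      exact absurd this (Fin.ne_of_lt (Fin.castSucc_lt_last _))
    · have : h = h' := by
        funext x; have := congrFun e x
        exact Fin.castSucc_injective _ this
      subst this; rfl
  · rintro ⟨H, hH⟩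
    by_cases hl : H (Fin.last k) = Fin.last m
    · refine ⟨.inl ⟨fun i => H i.castSucc, fun a b hab => hH (by exact_mod_cast hab)⟩, ?_⟩
      simp only [monoBack]
      refine Subtype.ext (funext fun x => ?_)
      induction x using Fin.lastCases with
      | last => simp [hl]
      | cast i => simp
    · have hlt : ∀ x, (H x : ℕ) < m := by
        intro x
        have h1 : H x ≤ H (Fin.last k) := hH (Fin.le_last x)
        have h2 : H (Fin.last k) < Fin.last m := Fin.lt_last_iff_ne_last.2 hl
        have := lt_of_le_of_lt h1 h2
        simpa [Fin.lt_def] using this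
      refine ⟨.inr ⟨fun x => ⟨H x, hlt x⟩, fun a b hab => hH hab⟩, ?_⟩
      simp only [monoBack]
      exact Subtype.ext (funext fun x => by simp [Fin.ext_iff])
lemma monoCount_succ_succ (k m : ℕ) :
    monoCount (k+1) (m+1) = monoCount k (m+1) + monoCount (k+1) m := by
  have := Fintype.card_of_bijective (monoBack_bijective k m)
  simp only [Fintype.card_sum] at this
  simp only [monoCount]
  exact this.symm

lemma monoCount_eq (k m : ℕ) : monoCount k (m+1) = (m+k).choose k := by
  induction k generalizing m with
  | zero => simp [monoCount_zero]
  | succ k ih =>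
    induction m with
    | zero =>
      rw [monoCount_succ_succ, ih, monoCount_succ_zero]
      simp
    | succ m ihm =>
      rw [monoCount_succ_succ, ih, ihm]
      have : m + 1 + (k + 1) = (m + 1 + k) + 1 := by omega
      have h2 : m + (k+1) = m+1+k := by omega
      rw [this, Nat.choose_succ_succ (m+1+k) k, h2]


-- ===== helpers =====
private lemma card_filter_lt_fin {n : ℕ} (i : Fin n) :
    (univ.filter fun j : Fin n => j < i).card = i := by
  rw [← Fin.card_Iio i]; congr 1; ext j; simp [Finset.mem_Iio]

private lemma orderIso_filter_card {α : Type*} [LinearOrder α] [DecidableEq α] (s : Finset α)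
    {n : ℕ} (hs : s.card = n) (i : Fin n) :
    (s.filter fun a => a < (s.orderIsoOfFin hs i : α)).card = i := by
  have himg : s.filter (fun a => a < (s.orderIsoOfFin hs i : α)) =
      (univ.filter fun j : Fin n => j < i).image (fun j => (s.orderIsoOfFin hs j : α)) := by
    ext a
    simp only [mem_filter, mem_image, mem_univ, true_and]
    constructor
    · rintro ⟨has, hlt⟩
      have h1 : (⟨a, has⟩ : {x // x ∈ s}) < s.orderIsoOfFin hs i := Subtype.coe_lt_coe.1 hlt
      have h2 := (s.orderIsoOfFin hs).symm.lt_iff_lt.2 h1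
      rw [OrderIso.symm_apply_apply] at h2
      exact ⟨_, h2, by rw [OrderIso.apply_symm_apply]⟩
    · rintro ⟨j, hj, rfl⟩
      refine ⟨(s.orderIsoOfFin hs j).2, ?_⟩
      exact Subtype.coe_lt_coe.2 ((s.orderIsoOfFin hs).lt_iff_lt.2 hj)
  rw [himg]
  have hinj : Function.Injective (fun j : Fin n => (s.orderIsoOfFin hs j : α)) :=
    fun a b hab => (s.orderIsoOfFin hs).injective (Subtype.val_injective hab)
  rw [card_image_of_injective _ hinj, card_filter_lt_fin]

private lemma strictMono_eq_of_image_eq {α : Type*} [LinearOrder α] [DecidableEq α] {n : ℕ}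
    {f g : Fin n → α} (hf : StrictMono f) (hg : StrictMono g)
    (h : Finset.image f univ = Finset.image g univ) : f = g := by
  have hcard : (Finset.image f univ).card = n := by
    rw [Finset.card_image_of_injective _ hf.injective, card_univ, Fintype.card_fin]
  have h1 := Finset.orderEmbOfFin_unique hcard
    (fun x => Finset.mem_image_of_mem f (mem_univ x)) hf
  have h2 := Finset.orderEmbOfFin_unique hcard
    (fun x => h ▸ Finset.mem_image_of_mem g (mem_univ x)) hg
  exact h1.trans h2.symm

-- ===== code / rk =====
def code (m ℓ : ℕ) (f : Fin ℓ → Fin (m+1) × Fin ℓ) (x : Fin ℓ) : ℕ :=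
  ((f x).1 : ℕ) * ℓ + ((f x).2 : ℕ)

def codes (m ℓ : ℕ) (f : Fin ℓ → Fin (m+1) × Fin ℓ) : Finset ℕ := univ.image (code m ℓ f)

lemma code_div (m ℓ : ℕ) (f : Fin ℓ → Fin (m+1) × Fin ℓ) (x : Fin ℓ) :
    code m ℓ f x / ℓ = ((f x).1 : ℕ) := by
  have hx : ((f x).2 : ℕ) < ℓ := (f x).2.isLt
  have hℓ : 0 < ℓ := Nat.pos_of_ne_zero (by omega)
  rw [code, mul_comm, Nat.mul_add_div hℓ, Nat.div_eq_of_lt hx, add_zero]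

def rk {k n : ℕ} (h : Fin k → Fin n) (i : Fin k) : ℕ :=
  (univ.filter fun j => j < i ∧ h j = h i).card

lemma rk_le {k n : ℕ} (h : Fin k → Fin n) (i : Fin k) : rk h i ≤ (i : ℕ) := by
  rw [rk, ← card_filter_lt_fin i]
  exact card_le_card (fun j hj => by simp only [mem_filter, mem_univ, true_and] at hj ⊢; exact hj.1)

lemma rk_lt_rk {k n : ℕ} {h : Fin k → Fin n} {i j : Fin k} (hij : i < j) (hh : h i = h j) :
    rk h i < rk h j := by
  have hsub : insert i (univ.filter fun a => a < i ∧ h a = h i) ⊆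
      (univ.filter fun a => a < j ∧ h a = h j) := by
    intro a ha
    rcases Finset.mem_insert.1 ha with rfl | ha
    · exact mem_filter.2 ⟨mem_univ _, hij, hh⟩
    · obtain ⟨-, h1, h2⟩ := mem_filter.1 ha
      exact mem_filter.2 ⟨mem_univ _, h1.trans hij, h2.trans hh⟩
  have hni : i ∉ (univ.filter fun a => a < i ∧ h a = h i) := by simp
  have hins := Finset.card_insert_of_notMem hni
  have : rk h i + 1 ≤ rk h j := by
    rw [rk, rk, ← hins]
    exact card_le_card hsub
  omega

-- phi strict mono
lemma phi_strictMono {k n ℓ : ℕ} (hkℓ : k ≤ ℓ) {h : Fin k → Fin n} (hh : Monotone h) :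
    StrictMono (fun i => (h i : ℕ) * ℓ + rk h i) := by
  intro i j hij
  dsimp only
  rcases eq_or_lt_of_le (hh hij.le) with heq | hlt
  · have := rk_lt_rk hij heq
    have hval : (h i : ℕ) = (h j : ℕ) := congrArg Fin.val heq
    rw [hval]
    omega
  · have h1 : (h i : ℕ) + 1 ≤ (h j : ℕ) := hlt
    have h2 := Nat.mul_le_mul_right ℓ h1
    rw [add_mul, one_mul] at h2
    have h3 : rk h i ≤ (i : ℕ) := rk_le h i
    have h4 : (i : ℕ) < ℓ := lt_of_lt_of_le i.isLt hkℓ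
    omega

lemma mulAddDivHelper {a b ℓ : ℕ} (hb : b < ℓ) : (a * ℓ + b) / ℓ = a := by
  rw [mul_comm, Nat.mul_add_div (by omega), Nat.div_eq_of_lt hb, add_zero]

lemma k_le_of_surj {ℓ k : ℕ} {g : Fin ℓ → Fin k} (hg : Function.Surjective g) : k ≤ ℓ := by
  simpa using Fintype.card_le_of_surjective g hg

def bigF (m ℓ k : ℕ) (g : Fin ℓ → Fin k) (h : Fin k → Fin (m+1)) (hkℓ : k ≤ ℓ) :
    Fin ℓ → Fin (m+1) × Fin ℓ :=
  fun x => (h (g x),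
    ⟨rk h (g x), lt_of_le_of_lt (rk_le h (g x)) (lt_of_lt_of_le (g x).isLt hkℓ)⟩)

lemma codes_bigF (m ℓ k : ℕ) (g : Fin ℓ → Fin k) (h : Fin k → Fin (m+1)) (hkℓ : k ≤ ℓ)
    (hg : Function.Surjective g) :
    codes m ℓ (bigF m ℓ k g h hkℓ) = univ.image (fun i => (h i : ℕ) * ℓ + rk h i) := by
  rw [codes]
  have hc : code m ℓ (bigF m ℓ k g h hkℓ) = (fun i => (h i : ℕ) * ℓ + rk h i) ∘ g := rfl
  rw [hc, ← Finset.image_image, Finset.image_univ_of_surjective hg]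

lemma card_codes_bigF (m ℓ k : ℕ) (g : Fin ℓ → Fin k) (h : Fin k → Fin (m+1)) (hkℓ : k ≤ ℓ)
    (hg : Function.Surjective g) (hh : Monotone h) :
    (codes m ℓ (bigF m ℓ k g h hkℓ)).card = k := by
  rw [codes_bigF m ℓ k g h hkℓ hg,
    card_image_of_injective _ (phi_strictMono hkℓ hh).injective, card_univ, Fintype.card_fin]

lemma isBPA_bigF (m ℓ k : ℕ) (g : Fin ℓ → Fin k) (h : Fin k → Fin (m+1)) (hkℓ : k ≤ ℓ)
    (hg : Function.Surjective g) : IsBPA m ℓ (bigF m ℓ k g h hkℓ) := by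
  intro x r hr
  have hrS : (r : ℕ) < (univ.filter fun j : Fin k => j < g x ∧ h j = h (g x)).card := hr
  set S := univ.filter (fun j : Fin k => j < g x ∧ h j = h (g x)) with hS
  have hi0 := ((S.orderIsoOfFin rfl) ⟨(r : ℕ), hrS⟩).2
  set i0 : Fin k := ((S.orderIsoOfFin rfl) ⟨(r : ℕ), hrS⟩ : Fin k) with hi0def
  rw [hS] at hi0
  obtain ⟨-, hi0lt, hi0h⟩ := mem_filter.1 hi0
  have hsets : (univ.filter fun j => j < i0 ∧ h j = h i0) = S.filter (fun a => a < i0) := by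
    ext j
    simp only [mem_filter, mem_univ, true_and, hS]
    constructor
    · rintro ⟨h1, h2⟩
      exact ⟨⟨h1.trans hi0lt, h2.trans hi0h⟩, h1⟩
    · rintro ⟨⟨-, h2⟩, h1⟩
      exact ⟨h1, h2.trans hi0h.symm⟩
  have hrk : rk h i0 = (r : ℕ) := by
    rw [rk, hsets, hi0def]
    exact orderIso_filter_card S rfl ⟨(r : ℕ), hrS⟩
  obtain ⟨y, hy⟩ := hg i0
  refine ⟨y, ?_, ?_⟩
  · show h (g y) = h (g x)
    rw [hy, hi0h]
  · apply Fin.ext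
    show rk h (g y) = (r : ℕ)
    rw [hy, hrk]

lemma bigF_inj (m ℓ k : ℕ) {g g' : Fin ℓ → Fin k} {h h' : Fin k → Fin (m+1)}
    (hkℓ : k ≤ ℓ) (hkℓ' : k ≤ ℓ) (hg : Function.Surjective g) (hh : Monotone h)
    (hg' : Function.Surjective g') (hh' : Monotone h')
    (heq : bigF m ℓ k g h hkℓ = bigF m ℓ k g' h' hkℓ') : g = g' ∧ h = h' := by
  have hφ : (fun i => (h i : ℕ) * ℓ + rk h i) = (fun i => (h' i : ℕ) * ℓ + rk h' i) := by
    refine strictMono_eq_of_image_eq (phi_strictMono hkℓ hh) (phi_strictMono hkℓ' hh') ?_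
    rw [← codes_bigF m ℓ k g h hkℓ hg, ← codes_bigF m ℓ k g' h' hkℓ' hg', heq]
  have hgg : g = g' := by
    funext x
    have e1 : code m ℓ (bigF m ℓ k g h hkℓ) x = (h (g x) : ℕ) * ℓ + rk h (g x) := rfl
    have e2 : code m ℓ (bigF m ℓ k g' h' hkℓ') x = (h' (g' x) : ℕ) * ℓ + rk h' (g' x) := rfl
    have e3 : (fun i => (h i : ℕ) * ℓ + rk h i) (g x)
        = (fun i => (h i : ℕ) * ℓ + rk h i) (g' x) := by
      show (h (g x) : ℕ) * ℓ + rk h (g x) = (h (g' x) : ℕ) * ℓ + rk h (g' x)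
      rw [← e1, heq, e2, congrFun hφ (g' x)]
    exact (phi_strictMono hkℓ hh).injective e3
  refine ⟨hgg, funext fun i => ?_⟩
  have e := congrFun hφ i
  have hrk1 : rk h i < ℓ := lt_of_le_of_lt (rk_le h i) (lt_of_lt_of_le i.isLt hkℓ)
  have hrk2 : rk h' i < ℓ := lt_of_le_of_lt (rk_le h' i) (lt_of_lt_of_le i.isLt hkℓ)
  apply Fin.ext
  rw [← mulAddDivHelper (a := (h i : ℕ)) hrk1, ← mulAddDivHelper (a := (h' i : ℕ)) hrk2, e]

def bigBack (m ℓ k : ℕ) :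
    {p : (Fin ℓ → Fin k) × (Fin k → Fin (m+1)) // Function.Surjective p.1 ∧ Monotone p.2} →
    {f : Fin ℓ → Fin (m+1) × Fin ℓ // IsBPA m ℓ f ∧ (codes m ℓ f).card = k} :=
  fun p => ⟨bigF m ℓ k p.1.1 p.1.2 (k_le_of_surj p.2.1),
    isBPA_bigF m ℓ k p.1.1 p.1.2 _ p.2.1,
    card_codes_bigF m ℓ k p.1.1 p.1.2 _ p.2.1 p.2.2⟩

lemma bigBack_bijective (m ℓ k : ℕ) : Function.Bijective (bigBack m ℓ k) := by
  constructor
  · rintro ⟨⟨g, h⟩, hg, hh⟩ ⟨⟨g', h'⟩, hg', hh'⟩ e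
    simp only [bigBack, Subtype.mk.injEq] at e
    obtain ⟨e1, e2⟩ := bigF_inj m ℓ k _ _ hg hh hg' hh' e
    subst e1; subst e2; rfl
  · rintro ⟨f, hBPA, hcard⟩
    classical
    set σ := (codes m ℓ f).orderIsoOfFin hcard with hσ
    have hmem : ∀ x, code m ℓ f x ∈ codes m ℓ f := fun x => mem_image_of_mem _ (mem_univ x)
    set g : Fin ℓ → Fin k := fun x => σ.symm ⟨code m ℓ f x, hmem x⟩ with hgdef
    have hσg : ∀ x, (σ (g x) : ℕ) = code m ℓ f x := by
      intro x
      rw [hgdef]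
      simp only [OrderIso.apply_symm_apply]
    have hbound : ∀ i : Fin k, (σ i : ℕ) / ℓ < m + 1 := by
      intro i
      obtain ⟨x, -, hx⟩ := mem_image.1 (σ i).2
      rw [← hx, code_div]
      exact (f x).1.isLt
    set h : Fin k → Fin (m+1) := fun i => ⟨(σ i : ℕ) / ℓ, hbound i⟩ with hhdef
    have hg : Function.Surjective g := by
      intro i
      obtain ⟨x, -, hx⟩ := mem_image.1 (σ i).2
      refine ⟨x, ?_⟩
      rw [hgdef]
      simp only
      have hxx : (⟨code m ℓ f x, hmem x⟩ : {t // t ∈ codes m ℓ f}) = σ i := Subtype.ext hx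
      rw [hxx, OrderIso.symm_apply_apply]
    have hh : Monotone h := by
      intro i j hij
      have hc : (σ i : ℕ) ≤ (σ j : ℕ) := Subtype.coe_le_coe.2 (σ.monotone hij)
      exact Nat.div_le_div_right hc
    refine ⟨⟨(g, h), hg, hh⟩, ?_⟩
    apply Subtype.ext
    show bigF m ℓ k g h (k_le_of_surj hg) = f
    funext x
    have h1 : h (g x) = (f x).1 := by
      apply Fin.ext
      show (σ (g x) : ℕ) / ℓ = _
      rw [hσg x, code_div]
    have h2 : rk h (g x) = ((f x).2 : ℕ) := by
      have s1 : rk h (g x) = ((codes m ℓ f).filter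
          (fun t => t < code m ℓ f x ∧ t / ℓ = ((f x).1 : ℕ))).card := by
        rw [rk]
        apply card_nbij (fun j => (σ j : ℕ))
        · intro j hj
          obtain ⟨-, hj1, hj2⟩ := mem_filter.1 hj
          refine mem_filter.2 ⟨(σ j).2, ?_, ?_⟩
          · have hlt := Subtype.coe_lt_coe.2 (σ.lt_iff_lt.2 hj1)
            rwa [hσg x] at hlt
          · have hv : (h j : ℕ) = (h (g x) : ℕ) := congrArg Fin.val hj2
            exact hv.trans (congrArg Fin.val h1)
        · intro a _ b _ hab
          exact σ.injective (Subtype.val_injective hab)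
        · intro t ht
          obtain ⟨htc, hlt, hdiv⟩ := mem_filter.1 (Finset.mem_coe.1 ht)
          refine ⟨σ.symm ⟨t, htc⟩, ?_, ?_⟩
          · have hst : (σ (σ.symm ⟨t, htc⟩) : ℕ) = t := by
              rw [OrderIso.apply_symm_apply]
            refine Finset.mem_coe.2 (mem_filter.2 ⟨mem_univ _, ?_, ?_⟩)
            · have : (σ (σ.symm ⟨t, htc⟩) : ℕ) < (σ (g x) : ℕ) := by
                rw [hst, hσg x]; exact hlt
              exact σ.lt_iff_lt.1 (Subtype.coe_lt_coe.1 this)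
            · apply Fin.ext
              show (σ (σ.symm ⟨t, htc⟩) : ℕ) / ℓ = (σ (g x) : ℕ) / ℓ
              rw [hst, hσg x, code_div, hdiv]
          · show (σ (σ.symm ⟨t, htc⟩) : ℕ) = t
            rw [OrderIso.apply_symm_apply]
      have s2 : (codes m ℓ f).filter (fun t => t < code m ℓ f x ∧ t / ℓ = ((f x).1 : ℕ)) =
          (range ((f x).2 : ℕ)).image (fun r => ((f x).1 : ℕ) * ℓ + r) := by
        ext t
        simp only [mem_filter, mem_image, mem_range]
        constructor
        · rintro ⟨htc, hlt, hdiv⟩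
          obtain ⟨y, -, rfl⟩ := mem_image.1 htc
          have hy1 : ((f y).1 : ℕ) = ((f x).1 : ℕ) := by
            rw [← code_div m ℓ f y, hdiv]
          have e1 : code m ℓ f y = ((f x).1 : ℕ) * ℓ + ((f y).2 : ℕ) := by
            rw [code, hy1]
          refine ⟨((f y).2 : ℕ), ?_, e1.symm⟩
          rw [e1, code] at hlt
          omega
        · rintro ⟨r, hr, rfl⟩
          have hrℓ : r < ℓ := lt_trans hr (f x).2.isLt
          have hlt' : (⟨r, hrℓ⟩ : Fin ℓ) < (f x).2 := hr
          obtain ⟨y, hy1, hy2⟩ := hBPA x ⟨r, hrℓ⟩ hlt'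
          have ecy : code m ℓ f y = ((f x).1 : ℕ) * ℓ + r := by
            rw [code, congrArg Fin.val hy1, congrArg Fin.val hy2]
          refine ⟨by rw [← ecy]; exact hmem y, ?_, mulAddDivHelper hrℓ⟩
          rw [code]
          omega
      have hinj : Function.Injective (fun r : ℕ => ((f x).1 : ℕ) * ℓ + r) := by
        intro a b hab
        simp only at hab
        omega
      rw [s1, s2, card_image_of_injective _ hinj, card_range]
    exact Prod.ext h1 (Fin.ext h2)


/-- For every `m ≥ 0` and `ℓ ≥ 1`,
`r_{m,ℓ} = ∑_{k=0}^{ℓ} S(ℓ,k) · k! · C(m+k, k)`. -/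
theorem bpa_eq_sum_stirling2 (m ℓ : ℕ) (hℓ : 1 ≤ ℓ) :
    bpa m ℓ =
      ∑ k ∈ Finset.range (ℓ + 1), stirling2 ℓ k * Nat.factorial k * Nat.choose (m + k) k := by
  classical
  have h1 : bpa m ℓ = (univ.filter (IsBPA m ℓ)).card := Fintype.card_subtype _
  have h2 : ∀ f ∈ univ.filter (IsBPA m ℓ), (codes m ℓ f).card ∈ Finset.range (ℓ + 1) := by
    intro f _
    rw [mem_range, Nat.lt_succ_iff, codes]
    exact card_image_le.trans (by simp)
  rw [h1, card_eq_sum_card_fiberwise h2]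
  refine Finset.sum_congr rfl fun k hk => ?_
  have e1 : (filter (fun f => (codes m ℓ f).card = k) (filter (IsBPA m ℓ) univ)).card
      = Fintype.card {f : Fin ℓ → Fin (m+1) × Fin ℓ // IsBPA m ℓ f ∧ (codes m ℓ f).card = k} := by
    rw [Fintype.card_subtype, filter_filter]
  rw [e1, ← Fintype.card_of_bijective (bigBack_bijective m ℓ k),
    Fintype.card_congr (Equiv.subtypeProdEquivProd), Fintype.card_prod]
  show surjCount ℓ k * monoCount k (m+1) = _
  rw [surjCount_eq, monoCount_eq]

end BPAAux
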